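/- Let m ≥ 1 and let A and B be 2m×2m real matrices with rank(A) ≤ m and rank(B) ≤ m. Then the function t ↦ det(tA + (1/t)B) is constant on ℝ \ {0}; in particular, for all nonzero s and t, det(tA + (1/t)B) = det(sA + (1/s)B). -/

import Mathlib

open Matrix Finset

/-- If the rows of `M` indexed by `T` agree with rows of a matrix `C` of rank
less than `T.card`, then `det M = 0`. -/
lemma aux_det_zero {n : ℕ} (M C : Matrix (Fin n) (Fin n) ℝ) (T : Finset (Fin n))
    (h : ∀ i ∈ T, M i = C i) (hC : C.rank < T.card) : M.det = 0 := by
  rw [← Matrix.exists_vecMul_eq_zero_iff]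
  have hnotli : ¬ LinearIndependent ℝ (fun i : T => M i) := by
    intro hli
    have h1 := linearIndependent_iff_card_le_finrank_span.mp hli
    have hsub : Submodule.span ℝ (Set.range (fun i : T => M i)) ≤
        Submodule.span ℝ (Set.range C) := by
      apply Submodule.span_le.mpr
      rintro x ⟨i, rfl⟩
      exact Submodule.subset_span ⟨i, (h i i.2).symm⟩
    have h2 : (Set.range (fun i : T => M i)).finrank ℝ ≤
        Module.finrank ℝ (Submodule.span ℝ (Set.range C)) :=
      Submodule.finrank_mono hsub
    rw [show Set.range C = Set.range C.row from rfl, ← Matrix.rank_eq_finrank_span_row] at h2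
    have := h1.trans h2
    simp [Fintype.card_coe] at this
    omega
  obtain ⟨g, hg0, i0, hi0⟩ := Fintype.not_linearIndependent_iff.mp hnotli
  classical
  refine ⟨fun i => if h : i ∈ T then g ⟨i, h⟩ else 0, ?_, ?_⟩
  · intro hv
    apply hi0
    have := congrFun hv i0
    simpa [i0.2] using this
  · ext j
    have heq : ∀ i : Fin n, (if h : i ∈ T then g ⟨i, h⟩ else 0) * M i j
        = if h : i ∈ T then g ⟨i, h⟩ * M i j else 0 := by
      intro i; split <;> simp
    simp only [Matrix.vecMul, dotProduct, heq]
    rw [← Finset.sum_subset T.subset_univ (by intro x _ hx; simp [hx]),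
      Finset.sum_dite_of_true (fun i hi => hi)]
    have := congrFun hg0 j
    rw [Finset.sum_apply] at this
    simpa using this

/-- Expansion of the determinant of `t • A + t⁻¹ • B` via multilinearity. -/
lemma aux_expand {n : ℕ} (A B : Matrix (Fin n) (Fin n) ℝ) (t : ℝ) :
    (t • A + t⁻¹ • B).det = ∑ S : Finset (Fin n),
      (t ^ S.card * t⁻¹ ^ (n - S.card)) •
        (Matrix.of (S.piecewise (fun i => A i) (fun i => B i))).det := by
  classical
  have h0 : (t • A + t⁻¹ • B).det
      = (Matrix.detRowAlternating : AlternatingMap ℝ (Fin n → ℝ) ℝ (Fin n))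
      ((fun i => t • A i) + (fun i => t⁻¹ • B i)) := rfl
  rw [h0]
  erw [(Matrix.detRowAlternating :
      AlternatingMap ℝ (Fin n → ℝ) ℝ (Fin n)).toMultilinearMap.map_add_univ]
  refine Finset.sum_congr rfl fun S _ => ?_
  have hfun : S.piecewise (fun i => t • A i) (fun i => t⁻¹ • B i)
      = fun i => (if i ∈ S then t else t⁻¹) •
          (S.piecewise (fun i => A i) (fun i => B i) i) := by
    funext i
    by_cases h : i ∈ S <;> simp [Finset.piecewise, h]
  show (Matrix.detRowAlternating : AlternatingMap ℝ (Fin n → ℝ) ℝ (Fin n))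
      (S.piecewise (fun i => t • A i) (fun i => t⁻¹ • B i)) = _
  rw [hfun]
  erw [(Matrix.detRowAlternating :
      AlternatingMap ℝ (Fin n → ℝ) ℝ (Fin n)).toMultilinearMap.map_smul_univ]
  congr 1
  rw [Finset.prod_ite]
  simp [Finset.filter_mem_eq_inter, Finset.filter_not, Finset.card_sdiff, Fintype.card_fin]

theorem stmt16 (m : ℕ) (hm : 1 ≤ m)
    (A B : Matrix (Fin (2 * m)) (Fin (2 * m)) ℝ)
    (hA : A.rank ≤ m) (hB : B.rank ≤ m) :
    ∀ s t : ℝ, s ≠ 0 → t ≠ 0 →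
      (t • A + t⁻¹ • B).det = (s • A + s⁻¹ • B).det := by
  classical
  suffices key : ∀ t : ℝ, t ≠ 0 → (t • A + t⁻¹ • B).det =
      ∑ S ∈ (Finset.univ : Finset (Fin (2 * m))).powersetCard m,
        (Matrix.of (S.piecewise (fun i => A i) (fun i => B i))).det by
    intro s t hs ht
    rw [key t ht, key s hs]
  intro t ht
  rw [aux_expand]
  rw [← Finset.sum_subset ((Finset.univ.powersetCard m).subset_univ)]
  · refine Finset.sum_congr rfl fun S hS => ?_
    have hcard : S.card = m := (Finset.mem_powersetCard_univ.mp hS)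
    rw [hcard]
    have : 2 * m - m = m := by omega
    rw [this, smul_eq_mul, ← mul_pow, mul_inv_cancel₀ ht, one_pow, one_mul]
  · intro S _ hS
    have hcard : S.card ≠ m := fun h => hS (Finset.mem_powersetCard_univ.mpr h)
    rcases lt_or_gt_of_ne hcard with hlt | hgt
    · -- |S| < m : complement has more than m rows of B
      have hz : (Matrix.of (S.piecewise (fun i => A i) (fun i => B i))).det = 0 := by
        apply aux_det_zero _ B Sᶜ
        · intro i hi
          exact S.piecewise_eq_of_notMem _ _ (Finset.mem_compl.mp hi)
        · have hSc : Sᶜ.card = 2 * m - S.card := by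
            rw [Finset.card_compl, Fintype.card_fin]
          have hle : S.card ≤ 2 * m := (S.card_le_univ).trans_eq (by simp)
          omega
      rw [hz, smul_zero]
    · -- |S| > m : S has more than m rows of A
      have hz : (Matrix.of (S.piecewise (fun i => A i) (fun i => B i))).det = 0 := by
        apply aux_det_zero _ A S
        · intro i hi
          exact S.piecewise_eq_of_mem _ _ hi
        · omega
      rw [hz, smul_zero]
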